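/- Let P be the lattice of partitions of a finite set with n elements, ordered so that x ≤ y if and only if y refines x. If a partition x has exactly r+1 blocks (i.e., rank r), then the Möbius function satisfies μ(0̂, x) = (-1)^r · r!, where 0̂ is the one-block partition. -/

import Mathlib

open Finset

/-- Helper constructor for finpartitions of `univ : Finset (Fin n)`. -/
def FPmk (n : ℕ) (P : Finset (Finset (Fin n))) (hne : ∀ p ∈ P, p ≠ ∅)
    (hdisj : (P : Set (Finset (Fin n))).PairwiseDisjoint id)
    (hsup : P.sup id = Finset.univ) :
    Finpartition (Finset.univ : Finset (Fin n)) :=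
  ⟨P, Finset.supIndep_iff_pairwiseDisjoint.2 hdisj, hsup, fun h => hne _ h (by simpa using rfl)⟩

@[simp] lemma FPmk_parts (n : ℕ) (P) (h1) (h2) (h3) : (FPmk n P h1 h2 h3).parts = P := rfl

lemma image_sdiff_parts {n : ℕ} (z : Finpartition (Finset.univ : Finset (Fin n)))
    {a B : Finset (Fin n)} (hB : B ∈ z.parts) (haB : a ⊆ B) :
    z.parts.image (· \ a) = insert (B \ a) (z.parts.erase B) := by
  have h1 : (z.parts.erase B).image (· \ a) = z.parts.erase B := by
    rw [Finset.image_congr (g := id), Finset.image_id]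
    intro q hq
    simp only [Finset.mem_coe, Finset.mem_erase] at hq
    have hd : Disjoint q B := z.disjoint hq.2 hB hq.1
    exact Finset.sdiff_eq_self_iff_disjoint.2 (hd.mono_right haB)
  conv_lhs => rw [← Finset.insert_erase hB]
  rw [Finset.image_insert, h1]

open Classical in
lemma sum_g (n : ℕ) (x : Finpartition (Finset.univ : Finset (Fin n)))
    (hx2 : 2 ≤ x.parts.card) :
    ∑ z ∈ Finset.univ.filter (fun z => x ≤ z),
      ((-1 : ℤ) ^ (z.parts.card - 1) * ((z.parts.card - 1).factorial : ℤ)) = 0 := by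
  classical
  set g : Finpartition (Finset.univ : Finset (Fin n)) → ℤ :=
    fun z => (-1 : ℤ) ^ (z.parts.card - 1) * ((z.parts.card - 1).factorial : ℤ) with hg
  obtain ⟨a, ha, c, hc, hac⟩ := Finset.one_lt_card.1 hx2
  have hane : a ≠ ∅ := x.ne_bot ha
  have hcne : c ≠ ∅ := x.ne_bot hc
  obtain ⟨i₀, hi₀⟩ := Finset.nonempty_iff_ne_empty.2 hane
  set σ : Finpartition (Finset.univ : Finset (Fin n)) → Finset (Finset (Fin n)) :=
    fun z => (z.parts.image (· \ a)).erase ∅ with hσ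
  set F := Finset.univ.filter (fun z : Finpartition (Finset.univ : Finset (Fin n)) => x ≤ z)
    with hF
  rw [← Finset.sum_fiberwise_of_maps_to (g := σ) (t := F.image σ)
    (fun z hz => Finset.mem_image_of_mem _ hz)]
  apply Finset.sum_eq_zero
  intro s hs
  obtain ⟨z₀, hz₀F, hz₀⟩ := Finset.mem_image.1 hs
  have hxz₀ : x ≤ z₀ := (Finset.mem_filter.1 hz₀F).2
  obtain ⟨B₀, hB₀, haB₀⟩ := hxz₀ ha
  -- properties of s
  have h0s : ∅ ∉ s := by rw [← hz₀]; exact Finset.notMem_erase _ _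
  have hsups : s.sup id = Finset.univ \ a := by
    rw [← hz₀, hσ]
    rw [show ((∅ : Finset (Fin n)) = ⊥) from rfl, Finset.sup_erase_bot, Finset.sup_image]
    rw [show (id ∘ (· \ a)) = (fun q : Finset (Fin n) => id q \ a) from rfl]
    rw [Finset.sup_sdiff_right, z₀.sup_parts]
  have hdisjs : (s : Set (Finset (Fin n))).PairwiseDisjoint id := by
    intro p hp q hq hpq
    simp only [Finset.mem_coe, hσ, ← hz₀, Finset.mem_erase, Finset.mem_image] at hp hq
    obtain ⟨-, p', hp', rfl⟩ := hp
    obtain ⟨-, q', hq', rfl⟩ := hq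
    have hne' : p' ≠ q' := by rintro rfl; exact hpq rfl
    exact ((z₀.disjoint hp' hq' hne').mono sdiff_le sdiff_le)
  have hdisjas : ∀ p ∈ s, Disjoint a p := by
    intro p hp
    have hle : p ⊆ Finset.univ \ a := by
      rw [← hsups]; exact Finset.le_sup (f := id) hp
    exact (Finset.sdiff_disjoint.mono_left hle).symm
  have has : a ∉ s := fun h => hane (disjoint_self.1 (hdisjas a h))
  have hxs : ∀ q ∈ x.parts, q ≠ a → ∃ p ∈ s, q ⊆ p := by
    intro q hq hqa
    obtain ⟨C, hC, hqC⟩ := hxz₀ hq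
    have hqa' : Disjoint q a := x.disjoint hq ha hqa
    have hqCa : q ⊆ C \ a := Finset.subset_sdiff.2 ⟨hqC, hqa'⟩
    refine ⟨C \ a, ?_, hqCa⟩
    rw [← hz₀, hσ]
    refine Finset.mem_erase.2 ⟨?_, Finset.mem_image_of_mem _ hC⟩
    intro h
    exact (x.nonempty_of_mem_parts hq).ne_empty (Finset.subset_empty.1 (h ▸ hqCa))
  have hsne : s.Nonempty := by
    obtain ⟨p, hp, -⟩ := hxs c hc (fun h => hac h.symm)
    exact ⟨p, hp⟩
  obtain ⟨k, hk⟩ : ∃ k, s.card = k + 1 :=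
    ⟨s.card - 1, (Nat.succ_pred_eq_of_pos (Finset.card_pos.2 hsne)).symm⟩
  -- the partition w0 = insert a s
  have pf1 : ∀ p ∈ insert a s, p ≠ ∅ := by
    intro p hp
    rcases Finset.mem_insert.1 hp with rfl | hp
    · exact hane
    · exact fun h => h0s (h ▸ hp)
  have pf2 : ((insert a s : Finset (Finset (Fin n))) : Set (Finset (Fin n))).PairwiseDisjoint
      id := by
    intro p hp q hq hpq
    simp only [Finset.coe_insert, Set.mem_insert_iff, Finset.mem_coe] at hp hq
    rcases hp with rfl | hp
    · rcases hq with rfl | hq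
      · exact absurd rfl hpq
      · exact hdisjas q hq
    · rcases hq with rfl | hq
      · exact (hdisjas p hp).symm
      · exact hdisjs hp hq hpq
  have pf3 : (insert a s).sup id = Finset.univ := by
    rw [Finset.sup_insert, hsups, id]
    simp only [sup_eq_union]
    exact Finset.union_sdiff_of_subset (Finset.subset_univ a)
  set w0 := FPmk n (insert a s) pf1 pf2 pf3 with hw0
  have hw0parts : w0.parts = insert a s := rfl
  have hσw0 : σ w0 = s := by
    rw [hσ]
    simp only
    rw [image_sdiff_parts w0 (by rw [hw0parts]; exact Finset.mem_insert_self a s)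
      Finset.Subset.rfl, Finset.sdiff_self, hw0parts, Finset.erase_insert has,
      Finset.erase_insert h0s]
  have hxw0 : x ≤ w0 := by
    intro q hq
    by_cases hqa : q = a
    · exact ⟨a, by rw [hw0parts]; exact Finset.mem_insert_self a s, by rw [hqa]⟩
    · obtain ⟨p, hp, hqp⟩ := hxs q hq hqa
      exact ⟨p, by rw [hw0parts]; exact Finset.mem_insert_of_mem hp, hqp⟩
  have hw0F : w0 ∈ F.filter (fun z => σ z = s) := by
    simp only [Finset.mem_filter, hF, Finset.mem_univ, true_and]
    exact ⟨hxw0, hσw0⟩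
  -- any fiber element containing a as a part is w0
  have hfibA : ∀ z ∈ F.filter (fun z => σ z = s), a ∈ z.parts → z = w0 := by
    intro z hz haz
    have hσz : σ z = s := (Finset.mem_filter.1 hz).2
    have hparts : z.parts = insert a s := by
      rw [← hσz, hσ]
      simp only
      rw [image_sdiff_parts z haz Finset.Subset.rfl, Finset.sdiff_self,
        Finset.erase_insert
          (fun h : (∅ : Finset (Fin n)) ∈ z.parts.erase a =>
            z.bot_notMem (Finset.mem_of_mem_erase h)),
        Finset.insert_erase haz]
    exact Finpartition.ext (by rw [hparts, hw0parts])
  -- structure of fiber elements not containing a as a part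
  have hstruct : ∀ z : Finpartition (Finset.univ : Finset (Fin n)),
      x ≤ z → σ z = s → a ∉ z.parts →
      z.part i₀ \ a ∈ s ∧ z.parts.card = s.card ∧
      z.parts = insert (a ∪ (z.part i₀ \ a)) (s.erase (z.part i₀ \ a)) := by
    intro z hxz hσz haz
    obtain ⟨B, hB, haB⟩ := hxz ha
    have hpB : z.part i₀ = B := z.part_eq_of_mem hB (haB hi₀)
    rw [hpB]
    have hBa : B \ a ≠ ∅ := by
      intro h
      have hBsub : B ⊆ a := by
        intro t ht
        by_contra hta
        have : t ∈ B \ a := Finset.mem_sdiff.2 ⟨ht, hta⟩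
        rw [h] at this
        exact absurd this (Finset.notMem_empty t)
      exact haz (by rwa [Finset.Subset.antisymm hBsub haB] at hB)
    have hnotmem : B \ a ∉ z.parts.erase B := by
      intro h
      obtain ⟨hne', hmem⟩ := Finset.mem_erase.1 h
      have hd : Disjoint (B \ a) B := z.disjoint hmem hB hne'
      exact hBa (disjoint_self.1 (hd.mono_right sdiff_le))
    have hs' : s = insert (B \ a) (z.parts.erase B) := by
      rw [← hσz, hσ]
      simp only
      rw [image_sdiff_parts z hB haB]
      apply Finset.erase_eq_of_notMem
      intro h
      rcases Finset.mem_insert.1 h with h | h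
      · exact hBa h.symm
      · exact z.bot_notMem (Finset.mem_of_mem_erase h)
    refine ⟨by rw [hs']; exact Finset.mem_insert_self _ _, ?_, ?_⟩
    · have hpos : 0 < z.parts.card := Finset.card_pos.2 ⟨B, hB⟩
      rw [hs', Finset.card_insert_of_notMem hnotmem, Finset.card_erase_of_mem hB]
      omega
    · rw [hs', Finset.erase_insert hnotmem, Finset.union_sdiff_of_subset haB,
        Finset.insert_erase hB]
  -- construction of the fiber element merging a into a given p ∈ s
  have hwp : ∀ p ∈ s, ∃ w : Finpartition (Finset.univ : Finset (Fin n)),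
      w.parts = insert (a ∪ p) (s.erase p) := by
    intro p hp
    refine ⟨FPmk n _ ?_ ?_ ?_, rfl⟩
    · intro q hq
      rcases Finset.mem_insert.1 hq with rfl | hq
      · intro h
        exact hane (Finset.subset_empty.1 (h ▸ Finset.subset_union_left))
      · exact fun h => h0s (h ▸ Finset.mem_of_mem_erase hq)
    · intro q1 h1 q2 h2 hne'
      simp only [Finset.coe_insert, Set.mem_insert_iff, Finset.mem_coe] at h1 h2
      have haux : ∀ q ∈ s.erase p, Disjoint (a ∪ p) q := by
        intro q hq
        obtain ⟨hqp, hqs⟩ := Finset.mem_erase.1 hq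
        exact Finset.disjoint_union_left.2
          ⟨hdisjas q hqs, hdisjs (Finset.mem_coe.2 hp) (Finset.mem_coe.2 hqs)
            (fun h => hqp h.symm)⟩
      rcases h1 with rfl | h1
      · rcases h2 with rfl | h2
        · exact absurd rfl hne'
        · exact haux q2 h2
      · rcases h2 with rfl | h2
        · exact (haux q1 h1).symm
        · exact hdisjs (Finset.mem_coe.2 (Finset.mem_of_mem_erase h1))
            (Finset.mem_coe.2 (Finset.mem_of_mem_erase h2)) hne'
    · have hps : p ∪ (s.erase p).sup id = Finset.univ \ a := by
        have h := Finset.sup_insert (b := p) (s := s.erase p)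
          (f := (id : Finset (Fin n) → Finset (Fin n)))
        rw [Finset.insert_erase hp, hsups] at h
        simpa [sup_eq_union] using h.symm
      rw [Finset.sup_insert]
      simp only [id_eq, sup_eq_union]
      rw [Finset.union_assoc, hps]
      exact Finset.union_sdiff_of_subset (Finset.subset_univ a)
  -- facts about the chosen partitions
  have hjfacts : ∀ p (hp : p ∈ s), x ≤ (hwp p hp).choose ∧ σ (hwp p hp).choose = s ∧
      a ∉ (hwp p hp).choose.parts ∧ (hwp p hp).choose.part i₀ = a ∪ p := by
    intro p hp
    have W := (hwp p hp).choose_spec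
    set w := (hwp p hp).choose with hw
    have hpne : p ≠ ∅ := fun h => h0s (h ▸ hp)
    have haup : a ∪ p ∉ s.erase p := by
      intro h
      have := hdisjas _ (Finset.mem_of_mem_erase h)
      exact hane (disjoint_self.1 (this.mono_right Finset.subset_union_left))
    have hxw : x ≤ w := by
      intro q hq
      by_cases hqa : q = a
      · exact ⟨a ∪ p, by rw [W]; exact Finset.mem_insert_self _ _,
          hqa ▸ Finset.subset_union_left⟩
      · obtain ⟨p', hp', hqp'⟩ := hxs q hq hqa
        by_cases hpp : p' = p
        · exact ⟨a ∪ p, by rw [W]; exact Finset.mem_insert_self _ _,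
            (hpp ▸ hqp').trans Finset.subset_union_right⟩
        · refine ⟨p', ?_, hqp'⟩
          rw [W]
          exact Finset.mem_insert_of_mem (Finset.mem_erase.2 ⟨hpp, hp'⟩)
    have hσw : σ w = s := by
      rw [hσ]
      simp only
      rw [image_sdiff_parts w (by rw [W]; exact Finset.mem_insert_self _ _)
        Finset.subset_union_left]
      rw [show (a ∪ p) \ a = p from by
        rw [Finset.union_sdiff_left]
        exact Finset.sdiff_eq_self_iff_disjoint.2 (hdisjas p hp).symm]
      rw [W, Finset.erase_insert haup, Finset.insert_erase hp,
        Finset.erase_eq_of_notMem h0s]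
    have haw : a ∉ w.parts := by
      rw [W]
      intro h
      rcases Finset.mem_insert.1 h with h | h
      · have : p ⊆ a := h ▸ Finset.subset_union_right
        exact hpne ((hdisjas p hp).symm.eq_bot_of_le this)
      · exact has (Finset.mem_of_mem_erase h)
    have hpart : w.part i₀ = a ∪ p :=
      w.part_eq_of_mem (by rw [W]; exact Finset.mem_insert_self _ _)
        (Finset.mem_union_left p hi₀)
    exact ⟨hxw, hσw, haw, hpart⟩
  -- assemble the fiber sum
  rw [← Finset.sum_filter_add_sum_filter_not (F.filter (fun z => σ z = s))
    (fun z => a ∈ z.parts)]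
  have hA : (F.filter (fun z => σ z = s)).filter (fun z => a ∈ z.parts) = {w0} := by
    ext z
    simp only [Finset.mem_filter, Finset.mem_singleton]
    constructor
    · rintro ⟨⟨h1, h2⟩, h3⟩
      exact hfibA z (Finset.mem_filter.2 ⟨h1, h2⟩) h3
    · rintro rfl
      have h := Finset.mem_filter.1 hw0F
      exact ⟨h, by rw [hw0parts]; exact Finset.mem_insert_self a s⟩
  have hcard0 : w0.parts.card = k + 2 := by
    rw [hw0parts, Finset.card_insert_of_notMem has, hk]
  have hcardB : ((F.filter (fun z => σ z = s)).filter (fun z => a ∉ z.parts)).card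
      = k + 1 := by
    rw [← hk]
    refine Finset.card_bij' (fun z _ => z.part i₀ \ a) (fun p hp => (hwp p hp).choose)
      ?_ ?_ ?_ ?_
    · intro z hz
      simp only [Finset.mem_filter] at hz
      obtain ⟨⟨hzF, hσz⟩, haz⟩ := hz
      exact (hstruct z (Finset.mem_filter.1 hzF).2 hσz haz).1
    · intro p hp
      obtain ⟨h1, h2, h3, h4⟩ := hjfacts p hp
      simp only [Finset.mem_filter]
      exact ⟨⟨Finset.mem_filter.2 ⟨Finset.mem_univ _, h1⟩, h2⟩, h3⟩
    · intro z hz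
      simp only [Finset.mem_filter] at hz
      obtain ⟨⟨hzF, hσz⟩, haz⟩ := hz
      obtain ⟨hs1, hs2, hs3⟩ := hstruct z (Finset.mem_filter.1 hzF).2 hσz haz
      exact Finpartition.ext ((hwp _ hs1).choose_spec.trans hs3.symm)
    · intro p hp
      obtain ⟨-, -, -, h4⟩ := hjfacts p hp
      show (hwp p hp).choose.part i₀ \ a = p
      rw [h4, Finset.union_sdiff_left]
      exact Finset.sdiff_eq_self_iff_disjoint.2 (hdisjas p hp).symm
  have hBconst : ∀ z ∈ (F.filter (fun z => σ z = s)).filter (fun z => a ∉ z.parts),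
      (-1 : ℤ) ^ (z.parts.card - 1) * ((z.parts.card - 1).factorial : ℤ)
        = (-1 : ℤ) ^ k * (k.factorial : ℤ) := by
    intro z hz
    simp only [Finset.mem_filter] at hz
    obtain ⟨⟨hzF, hσz⟩, haz⟩ := hz
    have hcz := (hstruct z (Finset.mem_filter.1 hzF).2 hσz haz).2.1
    rw [hcz, hk]
    simp
  rw [hA, Finset.sum_singleton, Finset.sum_congr rfl hBconst, Finset.sum_const, hcardB,
    hcard0]
  show (-1 : ℤ) ^ (k + 1) * ((k + 1).factorial : ℤ) + (k + 1) • ((-1 : ℤ) ^ k * _) = 0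
  rw [nsmul_eq_mul]
  push_cast [Nat.factorial_succ]
  ring

open Finset Classical in
/-- In the lattice of partitions of an `n`-element set, ordered so that `x ≤ y` iff `y`
refines `x` (so the one-block partition `b` is the bottom element `0̂`), the Möbius
function satisfies `μ(0̂, x) = (-1)^r · r!` where `x` has `r + 1` blocks.
Here the Mathlib order on `Finpartition` (`P ≤ Q` iff `P` refines `Q`) is the dual of the
paper's order, so the interval `0̂ ≤ z < y` of the paper is `{z | y < z}` in Mathlib's order,
and `μ = μ(0̂, ·)` is characterised by `μ 0̂ = 1` and `μ y = -∑_{0̂ ≤ z < y} μ z` for `y ≠ 0̂`. -/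
theorem stmt0 (n : ℕ) (b : Finpartition (Finset.univ : Finset (Fin n)))
    (hb : b.parts = {Finset.univ})
    (hbot : ∀ x : Finpartition (Finset.univ : Finset (Fin n)), x ≤ b)
    (μ : Finpartition (Finset.univ : Finset (Fin n)) → ℤ)
    (hμb : μ b = 1)
    (hμ : ∀ y, y ≠ b →
      μ y = -∑ z ∈ Finset.univ.filter (fun z => y < z), μ z)
    (x : Finpartition (Finset.univ : Finset (Fin n))) (r : ℕ)
    (hx : x.parts.card = r + 1) :
    μ x = (-1) ^ r * (r.factorial : ℤ) := by
  classical
  have huniv : (Finset.univ : Finset (Fin n)) ∈ b.parts := by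
    rw [hb]; exact Finset.mem_singleton_self _
  have hbcard : b.parts.card = 1 := by rw [hb]; simp
  have hcard2 : ∀ y : Finpartition (Finset.univ : Finset (Fin n)),
      y ≠ b → 2 ≤ y.parts.card := by
    intro y hy
    by_contra h
    push_neg at h
    rcases (by omega : y.parts.card = 0 ∨ y.parts.card = 1) with h0 | h1
    · have hemp : y.parts = ∅ := Finset.card_eq_zero.1 h0
      have hs := y.sup_parts
      rw [hemp, Finset.sup_empty] at hs
      apply b.bot_notMem
      rw [hb]
      exact Finset.mem_singleton.2 hs
    · obtain ⟨p, hp⟩ := Finset.card_eq_one.1 h1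
      have hsup := y.sup_parts
      rw [hp, Finset.sup_singleton] at hsup
      refine hy (Finpartition.ext ?_)
      rw [hp, hb]
      simpa using hsup
  have key : ∀ (d : ℕ) (y : Finpartition (Finset.univ : Finset (Fin n))),
      (Finset.univ.filter (fun z => y < z)).card ≤ d →
      μ y = (-1 : ℤ) ^ (y.parts.card - 1) * ((y.parts.card - 1).factorial : ℤ) := by
    intro d
    induction d with
    | zero =>
      intro y _
      by_cases hyb : y = b
      · subst hyb; rw [hμb, hbcard]; simp
      · exfalso
        have hmem : b ∈ Finset.univ.filter (fun z => y < z) :=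
          Finset.mem_filter.2 ⟨Finset.mem_univ _, lt_of_le_of_ne (hbot y) hyb⟩
        have := Finset.card_pos.2 ⟨b, hmem⟩
        omega
    | succ d IH =>
      intro y hy
      by_cases hyb : y = b
      · subst hyb; rw [hμb, hbcard]; simp
      · have h2 := hcard2 y hyb
        have hstep : ∀ z ∈ Finset.univ.filter (fun z => y < z), μ z =
            (-1 : ℤ) ^ (z.parts.card - 1) * ((z.parts.card - 1).factorial : ℤ) := by
          intro z hz
          have hyz : y < z := (Finset.mem_filter.1 hz).2
          apply IH
          have hsub : Finset.univ.filter (fun w => z < w)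
              ⊆ Finset.univ.filter (fun w => y < w) := by
            intro w hw
            exact Finset.mem_filter.2
              ⟨Finset.mem_univ _, hyz.trans (Finset.mem_filter.1 hw).2⟩
          have hmem : z ∈ Finset.univ.filter (fun w => y < w) :=
            Finset.mem_filter.2 ⟨Finset.mem_univ _, hyz⟩
          have hnot : z ∉ Finset.univ.filter (fun w => z < w) := by simp
          have := Finset.card_lt_card ((Finset.ssubset_iff_of_subset hsub).2
            ⟨z, hmem, hnot⟩)
          omega
        rw [hμ y hyb, Finset.sum_congr rfl hstep]
        have hsplit : Finset.univ.filter (fun z => y ≤ z)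
            = insert y (Finset.univ.filter (fun z => y < z)) := by
          ext z
          simp only [Finset.mem_filter, Finset.mem_insert, Finset.mem_univ, true_and]
          constructor
          · intro h
            rcases eq_or_lt_of_le h with h | h
            · exact Or.inl h.symm
            · exact Or.inr h
          · rintro (rfl | h)
            · exact le_rfl
            · exact le_of_lt h
        have hzero := sum_g n y h2
        rw [hsplit, Finset.sum_insert (by simp)] at hzero
        linarith
  have hkey := key _ x le_rfl
  rw [hkey, hx]
  simp
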